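/- The stabilization order n* of the Krylov subspace sequence satisfies n* ≤ 𝒩[S], where S = {p_i + p_j : p_i ≠ p_j} is the set of sums of distinct pairs of eigenvalues of ρ and 𝒩[S] is the number of distinct values in S. -/

import Mathlib

open Matrix BigOperators Finset Polynomial
open scoped Classical

namespace KST

variable {d : ℕ}

/-- Weighted inner product ⟨X,Y⟩_ρ = Re tr(ρ(XY+YX))/2. -/
noncomputable def wip (ρ X Y : Matrix (Fin d) (Fin d) ℂ) : ℝ :=
  (((ρ * (X * Y + Y * X)).trace) / 2).re

/-- Membership in 𝒳: Hermitian with ⟨k|X|l⟩ = 0 whenever p_k = p_l = 0. -/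
def memX (p : Fin d → ℝ) (v : Fin d → (Fin d → ℂ)) (X : Matrix (Fin d) (Fin d) ℂ) : Prop :=
  X.IsHermitian ∧ ∀ k l, p k = 0 → p l = 0 → star (v k) ⬝ᵥ X.mulVec (v l) = 0

/-- The superoperator R_ρ(X) = (ρX + Xρ)/2. -/
noncomputable def Rop (ρ : Matrix (Fin d) (Fin d) ℂ) (X : Matrix (Fin d) (Fin d) ℂ) :
    Matrix (Fin d) (Fin d) ℂ :=
  (1/2 : ℂ) • (ρ * X + X * ρ)

/-- The operator i[ρ,H]. -/
noncomputable def comm (ρ H : Matrix (Fin d) (Fin d) ℂ) : Matrix (Fin d) (Fin d) ℂ :=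
  Complex.I • (ρ * H - H * ρ)

/-- Krylov subspace 𝒦_n = span_ℝ {R_ρ^k(i[ρ,H]) : 0 ≤ k ≤ n-1}. -/
noncomputable def K (ρ H : Matrix (Fin d) (Fin d) ℂ) (n : ℕ) :
    Submodule ℝ (Matrix (Fin d) (Fin d) ℂ) :=
  Submodule.span ℝ ((fun k => (Rop ρ)^[k] (comm ρ H)) '' (Set.Iio n))

/-- Quantum Fisher information (spectral formula). -/
noncomputable def FQ (p : Fin d → ℝ) (v : Fin d → (Fin d → ℂ))
    (H : Matrix (Fin d) (Fin d) ℂ) : ℝ :=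
  2 * ∑ k, ∑ l, if 0 < p k + p l then
    (p k - p l)^2 / (p k + p l) * Complex.normSq (star (v k) ⬝ᵥ H.mulVec (v l)) else 0

/-- T_k = tr(i[ρ,H] R_ρ^k(i[ρ,H])). -/
noncomputable def Tk (ρ H : Matrix (Fin d) (Fin d) ℂ) (k : ℕ) : ℝ :=
  ((comm ρ H * (Rop ρ)^[k] (comm ρ H)).trace).re

/-- P is the orthogonal projection of L onto 𝒦_n w.r.t. ⟨·,·⟩_ρ. -/
def IsProj (ρ H : Matrix (Fin d) (Fin d) ℂ) (n : ℕ)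
    (L P : Matrix (Fin d) (Fin d) ℂ) : Prop :=
  P ∈ K ρ H n ∧ ∀ Y ∈ K ρ H n, wip ρ (L - P) Y = 0

/-- The stabilization order n* is at most the number of distinct values in
S = {p_i + p_j : p_i ≠ p_j}. -/
lemma aeval_eig {M : Type*} [AddCommGroup M] [Module ℂ M]
    (f : Module.End ℂ M) (μ : ℂ) (x : M) (h : f x = μ • x) (q : ℂ[X]) :
    (Polynomial.aeval f q) x = q.eval μ • x := by
  have hpow : ∀ n : ℕ, (f ^ n) x = μ ^ n • x := by
    intro n
    induction n with
    | zero => simp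
    | succ n ih =>
      rw [pow_succ, pow_succ, Module.End.mul_apply, h, _root_.map_smul, ih, smul_smul, mul_comm]
  induction q using Polynomial.induction_on' with
  | add a b ha hb => simp [map_add, LinearMap.add_apply, ha, hb, add_smul]
  | monomial n a =>
      simp [Polynomial.aeval_monomial, Module.End.mul_apply, hpow,
        Algebra.algebraMap_eq_smul_one, LinearMap.smul_apply, smul_smul]

lemma vmv_mul (u w : Fin d → ℂ) (A : Matrix (Fin d) (Fin d) ℂ) :
    vecMulVec u w * A = vecMulVec u (w ᵥ* A) := by
  ext a b
  simp only [mul_apply, vecMulVec_apply, vecMul, dotProduct, Finset.mul_sum]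
  exact Finset.sum_congr rfl fun x _ => by ring

lemma vmv_vmv (u w a b : Fin d → ℂ) :
    vecMulVec u w * vecMulVec a b = (w ⬝ᵥ a) • vecMulVec u b := by
  ext x y
  simp only [mul_apply, vecMulVec_apply, dotProduct, Matrix.smul_apply, smul_eq_mul, Finset.sum_mul]
  exact Finset.sum_congr rfl fun z _ => by ring

lemma vecMul_vmv (u a b : Fin d → ℂ) :
    u ᵥ* vecMulVec a b = (u ⬝ᵥ a) • b := by
  ext y
  simp only [vecMul, vecMulVec_apply, dotProduct, Pi.smul_apply, smul_eq_mul, Finset.sum_mul]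
  exact Finset.sum_congr rfl fun z _ => by ring

lemma vmv_mulVec (a b w : Fin d → ℂ) :
    vecMulVec a b *ᵥ w = (b ⬝ᵥ w) • a := by
  ext x
  simp only [mulVec, vecMulVec_apply, dotProduct, Pi.smul_apply, smul_eq_mul, Finset.sum_mul]
  exact Finset.sum_congr rfl fun z _ => by ring

lemma vecMul_sumM (u : Fin d → ℂ) (M : Fin d → Matrix (Fin d) (Fin d) ℂ) :
    u ᵥ* (∑ k, M k) = ∑ k, u ᵥ* M k := by
  ext y
  simp only [vecMul, dotProduct, Matrix.sum_apply, Finset.sum_apply, Finset.mul_sum]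
  exact Finset.sum_comm

lemma sumM_mulVec (M : Fin d → Matrix (Fin d) (Fin d) ℂ) (u : Fin d → ℂ) :
    (∑ k, M k) *ᵥ u = ∑ k, M k *ᵥ u := by
  ext y
  simp only [mulVec, dotProduct, Matrix.sum_apply, Finset.sum_apply, Finset.sum_mul]
  exact Finset.sum_comm

lemma vecMul_smulM (a : ℂ) (u : Fin d → ℂ) (M : Matrix (Fin d) (Fin d) ℂ) :
    u ᵥ* (a • M) = a • (u ᵥ* M) := by
  ext y
  simp only [vecMul, dotProduct, Matrix.smul_apply, Pi.smul_apply, smul_eq_mul, Finset.mul_sum]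
  exact Finset.sum_congr rfl fun x _ => by ring

theorem stmt11 {d : ℕ} (ρ : Matrix (Fin d) (Fin d) ℂ) (p : Fin d → ℝ) (v : Fin d → (Fin d → ℂ))
    (hρ : ρ = ∑ k, (p k : ℂ) • vecMulVec (v k) (star (v k)))
    (horth : ∀ k l, star (v k) ⬝ᵥ v l = (if k = l then 1 else 0))
    (hppos : ∀ k, 0 ≤ p k) (hptr : ∑ k, p k = 1) (H : Matrix (Fin d) (Fin d) ℂ) (hH : H.IsHermitian)
    (nstar : ℕ) (hstar : IsLeast {n : ℕ | K ρ H (n + 1) = K ρ H n} nstar) :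
    nstar ≤ ((Finset.univ.filter fun kl : Fin d × Fin d => p kl.1 ≠ p kl.2).image
      fun kl => p kl.1 + p kl.2).card := by
  classical
  set E : Fin d → Fin d → Matrix (Fin d) (Fin d) ℂ :=
    fun i j => vecMulVec (v i) (star (v j)) with hEdef
  set cf : Matrix (Fin d) (Fin d) ℂ → Fin d → Fin d → ℂ :=
    fun X i j => star (v i) ⬝ᵥ X.mulVec (v j) with hcfdef
  -- products of basis matrices
  have hEE : ∀ i j k l, E i j * E k l = (if j = k then (1:ℂ) else 0) • E i l := by
    intro i j k l
    simp only [hEdef]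
    rw [vmv_vmv, horth]
  -- completeness
  have hcomp : ∑ k, E k k = (1 : Matrix (Fin d) (Fin d) ℂ) := by
    set U : Matrix (Fin d) (Fin d) ℂ := Matrix.of fun i k => v k i with hU
    have hUU : Uᴴ * U = 1 := by
      ext k l
      have h := horth k l
      simp only [dotProduct, Pi.star_apply] at h
      simp only [mul_apply, conjTranspose_apply, one_apply, hU, Matrix.of_apply]
      simpa using h
    have hUU' : U * Uᴴ = 1 := mul_eq_one_comm.mp hUU
    ext a b
    have h2 : (U * Uᴴ) a b = (1 : Matrix (Fin d) (Fin d) ℂ) a b := by rw [hUU']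
    simp only [mul_apply, conjTranspose_apply, hU, Matrix.of_apply] at h2
    simpa [Matrix.sum_apply, hEdef, vecMulVec_apply] using h2
  -- decomposition of any matrix
  have hEXE : ∀ (X : Matrix (Fin d) (Fin d) ℂ) i j, E i i * X * E j j = cf X i j • E i j := by
    intro X i j
    simp only [hEdef, hcfdef]
    rw [vmv_mul, vmv_vmv, Matrix.dotProduct_mulVec]
  have hdec : ∀ X : Matrix (Fin d) (Fin d) ℂ, ∑ i, ∑ j, cf X i j • E i j = X := by
    intro X
    have h1 : ∑ i, ∑ j, cf X i j • E i j = (∑ i, E i i) * X * (∑ j, E j j) := by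
      simp only [Finset.sum_mul, Finset.mul_sum]
      rw [Finset.sum_comm]
      exact Finset.sum_congr rfl fun i _ => Finset.sum_congr rfl fun j _ => (hEXE X j i).symm
    rw [h1, hcomp, one_mul, mul_one]
  -- eigen relations
  have hρE : ∀ i j, ρ * E i j = (p i : ℂ) • E i j := by
    intro i j
    rw [hρ, Finset.sum_mul]
    have h1 : ∀ k, ((p k : ℂ) • vecMulVec (v k) (star (v k))) * E i j
        = if k = i then (p i : ℂ) • E i j else 0 := by
      intro k
      rw [smul_mul_assoc]
      have he : vecMulVec (v k) (star (v k)) = E k k := rfl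
      rw [he, hEE]
      by_cases h : k = i
      · subst h; simp
      · simp [h]
    rw [Finset.sum_congr rfl fun k _ => h1 k]
    simp
  have hEρ : ∀ i j, E i j * ρ = (p j : ℂ) • E i j := by
    intro i j
    rw [hρ, Finset.mul_sum]
    have h1 : ∀ k, E i j * ((p k : ℂ) • vecMulVec (v k) (star (v k)))
        = if k = j then (p j : ℂ) • E i j else 0 := by
      intro k
      rw [mul_smul_comm]
      have he : vecMulVec (v k) (star (v k)) = E k k := rfl
      rw [he, hEE]
      by_cases h : k = j
      · subst h; simp
      · simp [h, Ne.symm h]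
    rw [Finset.sum_congr rfl fun k _ => h1 k]
    simp
  -- the superoperator as a ℂ-linear endomorphism
  set f : Module.End ℂ (Matrix (Fin d) (Fin d) ℂ) :=
    { toFun := Rop ρ
      map_add' := by
        intro X Y
        simp only [Rop, mul_add, add_mul, smul_add]
        abel
      map_smul' := by
        intro c X
        simp only [Rop, mul_smul_comm, smul_mul_assoc, ← smul_add, RingHom.id_apply]
        rw [smul_comm] } with hfdef
  have hfk : ∀ (k : ℕ) (X : Matrix (Fin d) (Fin d) ℂ), (f ^ k) X = (Rop ρ)^[k] X := by
    intro k X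
    rw [Module.End.pow_apply]
    rfl
  have hfE : ∀ i j, f (E i j) = ((((p i + p j)/2 : ℝ) : ℂ)) • E i j := by
    intro i j
    show Rop ρ (E i j) = _
    rw [Rop, hρE, hEρ, ← add_smul, smul_smul]
    congr 1
    push_cast
    ring
  -- vanishing of the diagonal coefficients of the commutator
  have hvρ : ∀ i, star (v i) ᵥ* ρ = (p i : ℂ) • star (v i) := by
    intro i
    rw [hρ, vecMul_sumM]
    have h1 : ∀ k, star (v i) ᵥ* ((p k : ℂ) • vecMulVec (v k) (star (v k)))
        = if k = i then (p i : ℂ) • star (v i) else 0 := by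
      intro k
      rw [vecMul_smulM, vecMul_vmv, horth]
      by_cases h : k = i
      · subst h; simp
      · simp [h, Ne.symm h]
    rw [Finset.sum_congr rfl fun k _ => h1 k]
    simp
  have hρv : ∀ j, ρ *ᵥ v j = (p j : ℂ) • v j := by
    intro j
    rw [hρ, sumM_mulVec]
    have h1 : ∀ k, ((p k : ℂ) • vecMulVec (v k) (star (v k))) *ᵥ v j
        = if k = j then (p j : ℂ) • v j else 0 := by
      intro k
      rw [Matrix.smul_mulVec, vmv_mulVec, horth]
      by_cases h : k = j
      · subst h; simp
      · simp [h]
    rw [Finset.sum_congr rfl fun k _ => h1 k]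
    simp
  have hc0 : ∀ i j, p i = p j → cf (comm ρ H) i j = 0 := by
    intro i j hpij
    have h1 : star (v i) ⬝ᵥ (ρ * H) *ᵥ v j = (p i : ℂ) * (star (v i) ⬝ᵥ H *ᵥ v j) := by
      rw [← Matrix.mulVec_mulVec, Matrix.dotProduct_mulVec, hvρ, smul_dotProduct,
        smul_eq_mul]
    have h2 : star (v i) ⬝ᵥ (H * ρ) *ᵥ v j = (p j : ℂ) * (star (v i) ⬝ᵥ H *ᵥ v j) := by
      rw [← Matrix.mulVec_mulVec, hρv, Matrix.mulVec_smul, dotProduct_smul, smul_eq_mul]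
    simp only [hcfdef, comm]
    rw [Matrix.smul_mulVec, dotProduct_smul, Matrix.sub_mulVec, dotProduct_sub,
      h1, h2, hpij]
    simp
  -- the annihilating polynomial
  set S : Finset ℝ := (Finset.univ.filter fun kl : Fin d × Fin d => p kl.1 ≠ p kl.2).image
      fun kl => p kl.1 + p kl.2 with hSdef
  set N : ℕ := S.card with hNdef
  set qR : ℝ[X] := ∏ s ∈ S, (Polynomial.X - Polynomial.C (s/2)) with hqRdef
  have hmonic : qR.Monic := monic_prod_of_monic _ _ fun s _ => monic_X_sub_C _
  have hdeg : qR.natDegree = N := by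
    rw [hqRdef, Polynomial.natDegree_prod_of_monic _ _ fun s _ => monic_X_sub_C _]
    simp [hNdef]
  set q : ℂ[X] := qR.map (algebraMap ℝ ℂ) with hqdef
  have hqprod : q = ∏ s ∈ S, (Polynomial.X - Polynomial.C ((s : ℂ)/2)) := by
    rw [hqdef, hqRdef, Polynomial.map_prod]
    refine Finset.prod_congr rfl fun s _ => ?_
    simp [Polynomial.map_sub]
  have haev : (Polynomial.aeval f q) (comm ρ H) = 0 := by
    conv_lhs => rw [← hdec (comm ρ H)]
    rw [map_sum]
    refine Finset.sum_eq_zero fun i _ => ?_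
    rw [map_sum]
    refine Finset.sum_eq_zero fun j _ => ?_
    rw [_root_.map_smul, aeval_eig f _ _ (hfE i j)]
    by_cases hpij : p i = p j
    · rw [hc0 i j hpij]; simp
    · have hmem : p i + p j ∈ S := by
        rw [hSdef]
        exact Finset.mem_image.mpr ⟨(i, j), Finset.mem_filter.mpr ⟨Finset.mem_univ _, hpij⟩, rfl⟩
      have hz : q.eval ((((p i + p j)/2 : ℝ) : ℂ)) = 0 := by
        rw [hqprod, Polynomial.eval_prod]
        refine Finset.prod_eq_zero hmem ?_
        simp
      rw [hz]
      simp
  -- expansion: R^N L0 ∈ K N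
  have hmemN : (Rop ρ)^[N] (comm ρ H) ∈ K ρ H N := by
    have hqdegC : q.natDegree = N := by
      rw [hqdef, hmonic.natDegree_map, hdeg]
    have hexp := Polynomial.aeval_eq_sum_range (S := Module.End ℂ (Matrix (Fin d) (Fin d) ℂ)) (p := q) f
    rw [hqdegC] at hexp
    have h0 : (∑ i ∈ Finset.range (N + 1), q.coeff i • f ^ i) (comm ρ H) = 0 := by
      rw [← hexp]; exact haev
    rw [LinearMap.sum_apply] at h0
    simp only [LinearMap.smul_apply] at h0
    have hcoeff : ∀ i, q.coeff i = algebraMap ℝ ℂ (qR.coeff i) := by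
      intro i; rw [hqdef, Polynomial.coeff_map]
    simp only [hcoeff, algebraMap_smul] at h0
    rw [Finset.sum_range_succ] at h0
    have hlead : qR.coeff N = 1 := by
      have := hmonic.coeff_natDegree
      rwa [hdeg] at this
    rw [hlead, one_smul] at h0
    have hNf : (f ^ N) (comm ρ H) =
        ∑ i ∈ Finset.range N, (-(qR.coeff i)) • ((f ^ i) (comm ρ H)) := by
      have := eq_neg_of_add_eq_zero_right h0
      rw [this]
      rw [← Finset.sum_neg_distrib]
      exact Finset.sum_congr rfl fun i _ => (neg_smul _ _).symm
    rw [← hfk, hNf]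
    refine Submodule.sum_mem _ fun i hi => Submodule.smul_mem _ _ ?_
    refine Submodule.subset_span ?_
    exact ⟨i, Finset.mem_range.mp hi, (hfk i _).symm⟩
  -- conclude
  have hKeq : K ρ H (N + 1) = K ρ H N := by
    have hIio : Set.Iio (N + 1) = insert N (Set.Iio N) := by
      ext m
      simp only [Set.mem_Iio, Set.mem_insert_iff]
      omega
    rw [K, hIio, Set.image_insert_eq, Submodule.span_insert_eq_span]
    · rfl
    · exact hmemN
  exact hstar.2 hKeq

end KST
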